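/- Under the hypotheses of the uniform equitable decomposition theorem (φ a uniform automorphism of size k of G, M automorphism compatible, M_ℓ = M[𝒯_0, 𝒯_ℓ]), the matrix B_0 = Σ_{ℓ=0}^{k-1} M_ℓ equals the divisor matrix of M associated with the equitable partition of V(G) given by the orbits of φ: (B_0)_{ij} = Σ_{t ∈ V_j} m_{st} for any s ∈ V_i, where V_1,...,V_{n/k} are the orbits. -/

import Mathlib

open Matrix Finset

/-- In the setting of the uniform equitable decomposition, the matrix
`B₀ = ∑ ℓ, M[𝒯₀, 𝒯_ℓ]` is the divisor matrix of the equitable partition given by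
the orbits of `φ`: its `(i,j)` entry equals `∑_{t ∈ V_j} M s t` for any vertex `s`
in the orbit `V_i` of `τ i`, where `V_j` is the orbit of `τ j`. -/
theorem B0_eq_divisor_matrix
    {n k r : ℕ} (hk : 0 < k)
    (φ : Equiv.Perm (Fin n))
    (M : Matrix (Fin n) (Fin n) ℂ)
    (hM : ∀ i j, M (φ i) (φ j) = M i j)
    (τ : Fin r → Fin n)
    (horb : Function.Bijective (fun p : Fin k × Fin r => (⇑φ)^[p.1.val] (τ p.2)))
    (hper : ∀ i, (⇑φ)^[k] (τ i) = τ i)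
    (i j : Fin r) (m : ℕ) :
    ∑ ℓ : Fin k, M (τ i) ((⇑φ)^[ℓ.val] (τ j)) =
      ∑ t ∈ Finset.image (fun ℓ : Fin k => (⇑φ)^[ℓ.val] (τ j)) univ,
        M ((⇑φ)^[m] (τ i)) t := by
  haveI : NeZero k := ⟨hk.ne'⟩
  have hMiter : ∀ t a b, M ((⇑φ)^[t] a) ((⇑φ)^[t] b) = M a b := by
    intro t
    induction t with
    | zero => intro a b; simp
    | succ t ih =>
      intro a b
      simp only [Function.iterate_succ_apply', hM]
      exact ih a b
  have hperiod : ∀ s, (⇑φ)^[s] (τ j) = (⇑φ)^[s % k] (τ j) := by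
    intro s
    conv_lhs => rw [← Nat.mod_add_div s k]
    rw [Function.iterate_add_apply, Function.iterate_mul,
      Function.iterate_fixed (hper j)]
  have hinj : Function.Injective (fun ℓ : Fin k => (⇑φ)^[ℓ.val] (τ j)) := by
    intro a b hab
    have := horb.1 (a₁ := (a, j)) (a₂ := (b, j)) hab
    simpa using congrArg Prod.fst this
  rw [Finset.sum_image (fun a _ b _ h => hinj h)]
  refine Fintype.sum_equiv (Equiv.addLeft (Fin.ofNat k m)) _ _ ?_
  intro ℓ
  have h1 : ((Equiv.addLeft (Fin.ofNat k m)) ℓ).val = (m + ℓ.val) % k := by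
    simp [Equiv.addLeft, Fin.add_def, Fin.val_natCast, Fin.val_ofNat, Nat.add_mod]
  rw [h1, ← hperiod (m + ℓ.val), Function.iterate_add_apply, hMiter]
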